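/- arXiv:2509.03208 — 3 statements merged into one kernel-verified Lean document; each statement's English description precedes it below -/
import Mathlib

section
/- Let d ≥ 1, Θ and σ be d×d real matrices, b ∈ ℝ^d, and let X : [0,∞) → ℝ^d be continuous with X(0) = 0. Suppose r, U : [0,∞) → ℝ^d are continuous and satisfy, for every t ≥ 0, r(t) = r(0) + ∫₀ᵗ Θ(b − r(s)) ds + σX(t) and U(t) = U(0) − ∫₀ᵗ Θ U(s) ds + σX(t). Then for every t ≥ 0, r(t) = exp(−tΘ)(r(0) − U(0) − b) + b + U(t). -/
open Matrix intervalIntegral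

/-- `M ↦ (v ↦ M *ᵥ v)` as a continuous linear map on matrices. -/
noncomputable def mulVecCLM (d : ℕ) :
    Matrix (Fin d) (Fin d) ℝ →L[ℝ] ((Fin d → ℝ) →L[ℝ] (Fin d → ℝ)) :=
  LinearMap.toContinuousLinearMap
  { toFun := fun M => LinearMap.toContinuousLinearMap M.mulVecLin
    map_add' := by
      intro M N
      ext v i
      simp [Matrix.add_mulVec]
    map_smul' := by
      intro c M
      ext v i
      simp [Matrix.smul_mulVec] }

@[simp] theorem mulVecCLM_apply (d : ℕ) (M : Matrix (Fin d) (Fin d) ℝ) (v : Fin d → ℝ) :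
    mulVecCLM d M v = M.mulVec v := rfl

section Aux

attribute [local instance] Matrix.linftyOpNormedAddCommGroup Matrix.linftyOpNormedRing
  Matrix.linftyOpNormedAlgebra

theorem stmt_1_aux (d : ℕ) (hd : 1 ≤ d) (Θ σ : Matrix (Fin d) (Fin d) ℝ) (b : Fin d → ℝ)
    (X r U : ℝ → Fin d → ℝ)
    (hXcont : ContinuousOn X (Set.Ici 0)) (hX0 : X 0 = 0)
    (hrcont : ContinuousOn r (Set.Ici 0)) (hUcont : ContinuousOn U (Set.Ici 0))
    (hr : ∀ t : ℝ, 0 ≤ t →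
      r t = r 0 + (∫ s in (0:ℝ)..t, Θ.mulVec (b - r s)) + σ.mulVec (X t))
    (hU : ∀ t : ℝ, 0 ≤ t →
      U t = U 0 - (∫ s in (0:ℝ)..t, Θ.mulVec (U s)) + σ.mulVec (X t)) :
    ∀ t : ℝ, 0 ≤ t →
      r t = (NormedSpace.exp ((-t) • Θ)).mulVec (r 0 - U 0 - b) + b + U t := by
  classical
  set D : ℝ → Fin d → ℝ := fun t => r t - U t - b with hDdef
  set f : ℝ → Fin d → ℝ := fun s => Θ.mulVec (D s) with hfdef
  have hDcont : ContinuousOn D (Set.Ici 0) := (hrcont.sub hUcont).sub continuousOn_const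
  have hΘcont : Continuous fun v : Fin d → ℝ => Θ.mulVec v := by
    have := Θ.mulVecLin.continuous_of_finiteDimensional
    simpa [Matrix.coe_mulVecLin] using this
  have hfcont : ContinuousOn f (Set.Ici 0) := hΘcont.comp_continuousOn hDcont
  -- interval integrability of continuous integrands on `[0, t]`
  have hII : ∀ (g : ℝ → Fin d → ℝ), ContinuousOn g (Set.Ici 0) → ∀ t : ℝ, 0 ≤ t →
      IntervalIntegrable g MeasureTheory.volume 0 t := by
    intro g hg t ht
    apply ContinuousOn.intervalIntegrable
    rw [Set.uIcc_of_le ht]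
    exact hg.mono Set.Icc_subset_Ici_self
  have hIIr : ∀ t : ℝ, 0 ≤ t →
      IntervalIntegrable (fun s => Θ.mulVec (b - r s)) MeasureTheory.volume 0 t :=
    hII _ (hΘcont.comp_continuousOn (continuousOn_const.sub hrcont))
  have hIIU : ∀ t : ℝ, 0 ≤ t →
      IntervalIntegrable (fun s => Θ.mulVec (U s)) MeasureTheory.volume 0 t :=
    hII _ (hΘcont.comp_continuousOn hUcont)
  have hIIf : ∀ t : ℝ, 0 ≤ t → IntervalIntegrable f MeasureTheory.volume 0 t := hII f hfcont
  -- the difference satisfies a homogeneous linear integral equation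
  have hD : ∀ t : ℝ, 0 ≤ t → D t = D 0 - ∫ s in (0:ℝ)..t, f s := by
    intro t ht
    have key : (∫ s in (0:ℝ)..t, Θ.mulVec (b - r s)) + (∫ s in (0:ℝ)..t, Θ.mulVec (U s))
        = - ∫ s in (0:ℝ)..t, f s := by
      rw [← intervalIntegral.integral_add (hIIr t ht) (hIIU t ht),
        ← intervalIntegral.integral_neg]
      apply intervalIntegral.integral_congr
      intro s _
      show Θ.mulVec (b - r s) + Θ.mulVec (U s) = -(Θ.mulVec (r s - U s - b))
      rw [← Matrix.mulVec_neg, ← Matrix.mulVec_add]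
      congr 1
      abel
    have keyI : (∫ s in (0:ℝ)..t, f s)
        = -((∫ s in (0:ℝ)..t, Θ.mulVec (b - r s)) + (∫ s in (0:ℝ)..t, Θ.mulVec (U s))) := by
      rw [key, neg_neg]
    show r t - U t - b = (r 0 - U 0 - b) - ∫ s in (0:ℝ)..t, f s
    rw [hr t ht, hU t ht, keyI]
    abel
  -- `Φ u = exp(uΘ) *ᵥ (D 0 - ∫₀ᵘ f)` has zero derivative within `Ici 0`
  set Φ : ℝ → Fin d → ℝ :=
    fun u => (NormedSpace.exp (u • Θ)).mulVec (D 0 - ∫ s in (0:ℝ)..u, f s) with hΦdef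
  have hΦderiv : ∀ t : ℝ, t ∈ Set.Ici (0:ℝ) →
      HasDerivWithinAt Φ 0 (Set.Ici 0) t := by
    intro t ht
    have ht' : (0:ℝ) ≤ t := ht
    -- derivative of the integral part
    have hInt : HasDerivWithinAt (fun u => ∫ s in (0:ℝ)..u, f s) (f t) (Set.Ici 0) t := by
      rcases eq_or_lt_of_le ht' with h0 | h0
      · subst h0
        exact intervalIntegral.integral_hasDerivWithinAt_right (hIIf 0 le_rfl)
          ⟨Set.Ici 0, Filter.mem_of_superset self_mem_nhdsWithin Set.Ioi_subset_Ici_self,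
            hfcont.aestronglyMeasurable measurableSet_Ici⟩
          ((hfcont 0 Set.self_mem_Ici).mono Set.Ioi_subset_Ici_self)
      · have hmem : Set.Ici (0:ℝ) ∈ nhds t := Ici_mem_nhds h0
        have hca : ContinuousAt f t := (hfcont t ht').continuousAt hmem
        exact (intervalIntegral.integral_hasDerivAt_right (hIIf t ht')
          ⟨Set.Ici 0, hmem, hfcont.aestronglyMeasurable measurableSet_Ici⟩
          hca).hasDerivWithinAt
    have hI : HasDerivWithinAt (fun u => D 0 - ∫ s in (0:ℝ)..u, f s) (-(f t)) (Set.Ici 0) t :=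
      hInt.const_sub _
    -- derivative of the exponential part, as a CLM-valued function
    have hE : HasDerivAt (fun u : ℝ => NormedSpace.exp (u • Θ))
        (NormedSpace.exp (t • Θ) * Θ) t := hasDerivAt_exp_smul_const Θ t
    have hc : HasDerivWithinAt (fun u : ℝ => mulVecCLM d (NormedSpace.exp (u • Θ)))
        (mulVecCLM d (NormedSpace.exp (t • Θ) * Θ)) (Set.Ici 0) t :=
      (((mulVecCLM d).hasFDerivAt).comp_hasDerivAt t hE).hasDerivWithinAt
    have hΦ' : HasDerivWithinAt Φ
        ((mulVecCLM d (NormedSpace.exp (t • Θ) * Θ)) (D 0 - ∫ s in (0:ℝ)..t, f s)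
          + (mulVecCLM d (NormedSpace.exp (t • Θ))) (-(f t))) (Set.Ici 0) t :=
      hc.clm_apply hI
    have hval : (mulVecCLM d (NormedSpace.exp (t • Θ) * Θ)) (D 0 - ∫ s in (0:ℝ)..t, f s)
          + (mulVecCLM d (NormedSpace.exp (t • Θ))) (-(f t)) = 0 := by
      rw [mulVecCLM_apply, mulVecCLM_apply, ← hD t ht', hfdef]
      show (NormedSpace.exp (t • Θ) * Θ).mulVec (D t)
          + (NormedSpace.exp (t • Θ)).mulVec (-(Θ.mulVec (D t))) = 0
      rw [Matrix.mulVec_neg, ← Matrix.mulVec_mulVec]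
      abel
    rwa [hval] at hΦ'
  -- hence `Φ` is constant on `Ici 0`
  have hconst : ∀ t : ℝ, 0 ≤ t → Φ t = Φ 0 := by
    intro t ht
    refine (convex_Ici (0:ℝ)).is_const_of_fderivWithin_eq_zero
      (fun x hx => (hΦderiv x hx).differentiableWithinAt) ?_ ht Set.self_mem_Ici
    intro x hx
    have := (hΦderiv x hx).hasFDerivWithinAt.fderivWithin (uniqueDiffOn_Ici 0 x hx)
    rw [this]
    ext v
    simp
  intro t ht
  have hΦ0 : Φ 0 = D 0 := by
    simp [hΦdef, intervalIntegral.integral_same, Matrix.one_mulVec]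
  have hg : (NormedSpace.exp (t • Θ)).mulVec (D t) = D 0 := by
    have h1 : Φ t = (NormedSpace.exp (t • Θ)).mulVec (D t) := by
      show (NormedSpace.exp (t • Θ)).mulVec (D 0 - ∫ s in (0:ℝ)..t, f s) = _
      rw [← hD t ht]
    rw [← h1, hconst t ht, hΦ0]
  have hcomm : Commute ((-t) • Θ) (t • Θ) := ((Commute.refl Θ).smul_left _).smul_right _
  have hinv : NormedSpace.exp ((-t) • Θ) * NormedSpace.exp (t • Θ) = 1 := by
    rw [← Matrix.exp_add_of_commute _ _ hcomm, ← add_smul, neg_add_cancel, zero_smul,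
      NormedSpace.exp_zero]
  have hfinal : (NormedSpace.exp ((-t) • Θ)).mulVec (D 0) = D t := by
    rw [← hg, Matrix.mulVec_mulVec, hinv, Matrix.one_mulVec]
  have hD0 : D 0 = r 0 - U 0 - b := rfl
  have hDt : D t = r t - U t - b := rfl
  rw [← hD0, hfinal, hDt]
  abel

end Aux

/-- (Lemma 5.1 of the paper, pathwise form.) If `r` solves the generalized
Vasicek equation `r t = r 0 + ∫₀ᵗ Θ(b − r s) ds + σ X t` and `U` solves the Ornstein–Uhlenbeck
type equation `U t = U 0 − ∫₀ᵗ Θ U s ds + σ X t` driven by the same continuous noise `X` with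
`X 0 = 0`, then `r t = exp(−tΘ)(r 0 − U 0 − b) + b + U t` for all `t ≥ 0`. -/
theorem stmt_1 (d : ℕ) (hd : 1 ≤ d) (Θ σ : Matrix (Fin d) (Fin d) ℝ) (b : Fin d → ℝ)
    (X r U : ℝ → Fin d → ℝ)
    (hXcont : ContinuousOn X (Set.Ici 0)) (hX0 : X 0 = 0)
    (hrcont : ContinuousOn r (Set.Ici 0)) (hUcont : ContinuousOn U (Set.Ici 0))
    (hr : ∀ t : ℝ, 0 ≤ t →
      r t = r 0 + (∫ s in (0:ℝ)..t, Θ.mulVec (b - r s)) + σ.mulVec (X t))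
    (hU : ∀ t : ℝ, 0 ≤ t →
      U t = U 0 - (∫ s in (0:ℝ)..t, Θ.mulVec (U s)) + σ.mulVec (X t)) :
    ∀ t : ℝ, 0 ≤ t →
      r t = (NormedSpace.exp ((-t) • Θ)).mulVec (r 0 - U 0 - b) + b + U t :=
  stmt_1_aux d hd Θ σ b X r U hXcont hX0 hrcont hUcont hr hU
end

section
/- Let d ≥ 1, Θ and σ be d×d real matrices, b, r₀ ∈ ℝ^d, and let X : [0,∞) → ℝ^d be continuous with X(0) = 0. Define r : [0,∞) → ℝ^d by r(t) = exp(−tΘ)(r₀ − b) + b + σX(t) − ∫₀ᵗ Θ exp(−(t−s)Θ) σX(s) ds. Then r is continuous, r(0) = r₀, and for every t ≥ 0, r(t) = r₀ + ∫₀ᵗ Θ(b − r(s)) ds + σX(t). -/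
open Matrix intervalIntegral

private lemma matexp_cont {d : ℕ} (Θ : Matrix (Fin d) (Fin d) ℝ) :
    Continuous fun t : ℝ => NormedSpace.exp (t • Θ) := by
  letI : SeminormedRing (Matrix (Fin d) (Fin d) ℝ) := Matrix.linftyOpSemiNormedRing
  letI : NormedRing (Matrix (Fin d) (Fin d) ℝ) := Matrix.linftyOpNormedRing
  letI : NormedAlgebra ℝ (Matrix (Fin d) (Fin d) ℝ) := Matrix.linftyOpNormedAlgebra
  exact continuous_iff_continuousAt.2 fun t => (hasDerivAt_exp_smul_const' (𝕂 := ℝ) Θ t).continuousAt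

private lemma key_deriv {d : ℕ} (Θ : Matrix (Fin d) (Fin d) ℝ) {w : ℝ → Fin d → ℝ}
    {w' : Fin d → ℝ} {t : ℝ} (hw : HasDerivAt w w' t) :
    HasDerivAt (fun u => (NormedSpace.exp ((-u) • Θ)).mulVec (w u))
      (-(Θ.mulVec ((NormedSpace.exp ((-t) • Θ)).mulVec (w t)))
        + (NormedSpace.exp ((-t) • Θ)).mulVec w') t := by
  letI : SeminormedRing (Matrix (Fin d) (Fin d) ℝ) := Matrix.linftyOpSemiNormedRing
  letI : NormedRing (Matrix (Fin d) (Fin d) ℝ) := Matrix.linftyOpNormedRing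
  letI : NormedAlgebra ℝ (Matrix (Fin d) (Fin d) ℝ) := Matrix.linftyOpNormedAlgebra
  let J : Matrix (Fin d) (Fin d) ℝ →L[ℝ] ((Fin d → ℝ) →L[ℝ] (Fin d → ℝ)) :=
    LinearMap.toContinuousLinearMap
      { toFun := fun M => LinearMap.toContinuousLinearMap M.mulVecLin
        map_add' := fun M N => by ext v i; simp [Matrix.add_mulVec]
        map_smul' := fun c M => by ext v i; simp [Matrix.smul_mulVec] }
  have hexp : HasDerivAt (fun u : ℝ => NormedSpace.exp ((-u) • Θ))
      (-(Θ * NormedSpace.exp ((-t) • Θ))) t := by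
    have h1 := hasDerivAt_exp_smul_const' (𝕂 := ℝ) Θ (-t)
    have h2 : HasDerivAt (fun u : ℝ => -u) (-1) t := (hasDerivAt_id t).neg
    have h3 := h1.scomp t h2
    simp [Function.comp_def, neg_one_smul] at h3 ⊢
    exact h3
  have hJexp := J.hasFDerivAt.comp_hasDerivAt t hexp
  have hmain := hJexp.clm_apply hw
  have e2 : (J (-(Θ * NormedSpace.exp ((-t) • Θ)))) (w t)
      = -(Θ.mulVec ((NormedSpace.exp ((-t) • Θ)).mulVec (w t))) := by
    show (-(Θ * NormedSpace.exp ((-t) • Θ))).mulVec (w t) = _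
    rw [Matrix.neg_mulVec, Matrix.mulVec_mulVec]
  have hmain' : HasDerivAt (fun u => (NormedSpace.exp ((-u) • Θ)).mulVec (w u))
      ((J (-(Θ * NormedSpace.exp ((-t) • Θ)))) (w t) + (NormedSpace.exp ((-t) • Θ)).mulVec w') t :=
    hmain
  rw [e2] at hmain'
  exact hmain'

/-- (Lemma 5.2 of the paper, pathwise form.) The variation-of-constants
formula `r t = exp(−tΘ)(r₀ − b) + b + σ X t − ∫₀ᵗ Θ exp(−(t−s)Θ) σ X s ds` defines a continuous
solution of the generalized Vasicek equation `r t = r₀ + ∫₀ᵗ Θ(b − r s) ds + σ X t` with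
initial value `r₀`. -/
theorem stmt_2 (d : ℕ) (hd : 1 ≤ d) (Θ σ : Matrix (Fin d) (Fin d) ℝ) (b r₀ : Fin d → ℝ)
    (X : ℝ → Fin d → ℝ) (hXcont : ContinuousOn X (Set.Ici 0)) (hX0 : X 0 = 0)
    (r : ℝ → Fin d → ℝ)
    (hr : ∀ t : ℝ, 0 ≤ t →
      r t = (NormedSpace.exp ((-t) • Θ)).mulVec (r₀ - b) + b + σ.mulVec (X t)
        - ∫ s in (0:ℝ)..t, (Θ * NormedSpace.exp ((-(t - s)) • Θ)).mulVec (σ.mulVec (X s))) :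
    ContinuousOn r (Set.Ici 0) ∧ r 0 = r₀ ∧
      ∀ t : ℝ, 0 ≤ t →
        r t = r₀ + (∫ s in (0:ℝ)..t, Θ.mulVec (b - r s)) + σ.mulVec (X t) := by
  have hcomm : ∀ a : ℝ, Commute Θ (NormedSpace.exp (a • Θ)) :=
    fun a => Commute.exp_right ((Commute.refl Θ).smul_right a)
  set Y : ℝ → Fin d → ℝ := fun s => σ.mulVec (X (max s 0)) with hYdef
  have hYc : Continuous Y := by
    have hXc : Continuous fun s : ℝ => X (max s 0) :=
      hXcont.comp_continuous (continuous_id.max continuous_const) fun x => Set.mem_Ici.mpr (le_max_right _ _)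
    exact continuous_const.matrix_mulVec hXc
  have hY : ∀ s : ℝ, 0 ≤ s → Y s = σ.mulVec (X s) := fun s hs => by
    simp only [hYdef, max_eq_left hs]
  set f : ℝ → Fin d → ℝ := fun s => (NormedSpace.exp (s • Θ)).mulVec (Y s) with hfdef
  have hfc : Continuous f := (matexp_cont Θ).matrix_mulVec hYc
  set A : ℝ → Fin d → ℝ := fun t => ∫ s in (0:ℝ)..t, f s with hAdef
  have hA : ∀ t : ℝ, HasDerivAt A (f t) t := fun t =>
    (hfc.integral_hasStrictDerivAt 0 t).hasDerivAt
  set c : Fin d → ℝ := r₀ - b with hcdef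
  set h : ℝ → Fin d → ℝ :=
    fun t => (NormedSpace.exp ((-t) • Θ)).mulVec (c - Θ.mulVec (A t)) with hhdef
  let LΘ : (Fin d → ℝ) →L[ℝ] (Fin d → ℝ) := LinearMap.toContinuousLinearMap Θ.mulVecLin
  have hw : ∀ t : ℝ, HasDerivAt (fun u => c - Θ.mulVec (A u)) (-(Θ.mulVec (f t))) t := by
    intro t
    exact (LΘ.hasFDerivAt.comp_hasDerivAt t (hA t)).const_sub c
  have hexpcancel : ∀ t : ℝ, NormedSpace.exp ((-t) • Θ) * NormedSpace.exp (t • Θ) = 1 := by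
    intro t
    rw [← Matrix.exp_add_of_commute _ _ (((Commute.refl Θ).smul_left (-t)).smul_right t)]
    rw [← add_smul, neg_add_cancel, zero_smul, NormedSpace.exp_zero]
  have hh : ∀ t : ℝ, HasDerivAt h (-(Θ.mulVec (h t + Y t))) t := by
    intro t
    have H := key_deriv Θ (hw t)
    have e1 : (NormedSpace.exp ((-t) • Θ)).mulVec (f t) = Y t := by
      rw [hfdef]
      show (NormedSpace.exp ((-t) • Θ)).mulVec
        ((NormedSpace.exp (t • Θ)).mulVec (Y t)) = Y t
      rw [Matrix.mulVec_mulVec, hexpcancel, Matrix.one_mulVec]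
    have e2 : (NormedSpace.exp ((-t) • Θ)).mulVec (-(Θ.mulVec (f t)))
        = -(Θ.mulVec (Y t)) := by
      rw [Matrix.mulVec_neg, Matrix.mulVec_mulVec, ← (hcomm (-t)).eq,
        ← Matrix.mulVec_mulVec, e1]
    rw [e2] at H
    have e3 : -(Θ.mulVec (h t + Y t)) = -(Θ.mulVec (h t)) + -(Θ.mulVec (Y t)) := by
      rw [Matrix.mulVec_add, neg_add]
    rw [e3]
    exact H
  have hhc : Continuous h := by
    rw [continuous_iff_continuousAt]
    exact fun t => (hh t).continuousAt
  have hrh : ∀ t : ℝ, 0 ≤ t → r t = h t + b + Y t := by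
    intro t ht
    have hint : (∫ s in (0:ℝ)..t, (Θ * NormedSpace.exp ((-(t - s)) • Θ)).mulVec
        (σ.mulVec (X s)))
        = (NormedSpace.exp ((-t) • Θ)).mulVec (Θ.mulVec (A t)) := by
      have hEq : Set.EqOn
          (fun s => (Θ * NormedSpace.exp ((-(t - s)) • Θ)).mulVec (σ.mulVec (X s)))
          (fun s => ((NormedSpace.exp ((-t) • Θ) * Θ)).mulVec (f s))
          (Set.uIcc (0:ℝ) t) := by
        intro s hs
        rw [Set.uIcc_of_le ht] at hs
        have hsplit : (-(t - s)) • Θ = (-t) • Θ + s • Θ := by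
          rw [← add_smul]; ring_nf
        have hcomm2 : Commute ((-t) • Θ) (s • Θ) :=
          ((Commute.refl Θ).smul_left (-t)).smul_right s
        show (Θ * NormedSpace.exp ((-(t - s)) • Θ)).mulVec (σ.mulVec (X s))
          = ((NormedSpace.exp ((-t) • Θ) * Θ)).mulVec (f s)
        rw [hsplit, Matrix.exp_add_of_commute _ _ hcomm2]
        have hfs : f s = (NormedSpace.exp (s • Θ)).mulVec (σ.mulVec (X s)) := by
          rw [hfdef]
          show (NormedSpace.exp (s • Θ)).mulVec (Y s) = _
          rw [hY s hs.1]
        rw [hfs, Matrix.mulVec_mulVec, Matrix.mulVec_mulVec, Matrix.mulVec_mulVec]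
        congr 1
        rw [← mul_assoc, (hcomm (-t)).eq]
      rw [intervalIntegral.integral_congr hEq]
      have hpull := (LinearMap.toContinuousLinearMap
          ((NormedSpace.exp ((-t) • Θ) * Θ)).mulVecLin).intervalIntegral_comp_comm
          (hfc.intervalIntegrable (μ := MeasureTheory.volume) 0 t)
      have : (∫ s in (0:ℝ)..t, ((NormedSpace.exp ((-t) • Θ) * Θ)).mulVec (f s))
          = ((NormedSpace.exp ((-t) • Θ) * Θ)).mulVec (A t) := hpull
      rw [this, ← Matrix.mulVec_mulVec]
    rw [hr t ht, hint, hhdef]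
    show _ = (NormedSpace.exp ((-t) • Θ)).mulVec (c - Θ.mulVec (A t)) + b + Y t
    conv_rhs => rw [Matrix.mulVec_sub]
    rw [hY t ht]
    have key : ∀ p q z w : Fin d → ℝ, p + q + z - w = p - w + q + z := fun p q z w => by abel
    exact key _ _ _ _
  refine ⟨?_, ?_, ?_⟩
  · exact ((hhc.add continuous_const).add hYc).continuousOn.congr fun t ht => hrh t ht
  · have h0 := hr 0 le_rfl
    rw [hcdef] at h0
    simpa [hX0, NormedSpace.exp_zero] using h0
  · intro t ht
    have hInt2 : (∫ s in (0:ℝ)..t, Θ.mulVec (b - r s)) = h t - h 0 := by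
      have hEq : Set.EqOn (fun s => Θ.mulVec (b - r s))
          (fun s => -(Θ.mulVec (h s + Y s))) (Set.uIcc (0:ℝ) t) := by
        intro s hs
        rw [Set.uIcc_of_le ht] at hs
        show Θ.mulVec (b - r s) = -(Θ.mulVec (h s + Y s))
        rw [hrh s hs.1, show b - (h s + b + Y s) = -(h s + Y s) by abel, Matrix.mulVec_neg]
      rw [intervalIntegral.integral_congr hEq]
      exact intervalIntegral.integral_eq_sub_of_hasDerivAt (fun s _ => hh s)
        (((continuous_const.matrix_mulVec (hhc.add hYc)).neg).intervalIntegrable 0 t)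
    have h0c : h 0 = c := by
      rw [hhdef]
      show (NormedSpace.exp ((-(0:ℝ)) • Θ)).mulVec (c - Θ.mulVec (A 0)) = c
      rw [hAdef]
      show (NormedSpace.exp ((-(0:ℝ)) • Θ)).mulVec
        (c - Θ.mulVec (∫ s in (0:ℝ)..(0:ℝ), f s)) = c
      simp [NormedSpace.exp_zero]
    rw [hInt2, h0c, hrh t ht, hY t ht, hcdef]
    have key : ∀ p q z w : Fin d → ℝ, p + q + z = w + (p - (w - q)) + z := fun p q z w => by abel
    exact key _ _ _ _
end

section
/- Let (Ω, F, P) be a probability space and U : [0,∞) × Ω → ℝ^d a jointly measurable process such that each U_v is square-integrable, almost every sample path is locally Bochner integrable, and there is a measurable function γ : ℝ → ℝ^{d×d} whose norm is locally integrable such that E[U_v U_sᵀ] = γ(v − s) for all v, s ≥ 0. Then for every T > 0, the matrix M_T := E[((1/T)∫₀ᵀ U_v dv)·((1/T)∫₀ᵀ U_v dv)ᵀ] satisfies ‖M_T‖ ≤ (2/T)∫₀ᵀ ‖γ(v)‖ dv, where ‖·‖ is the operator norm induced by the Euclidean norm on ℝ^d. -/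
open MeasureTheory Matrix Filter intervalIntegral
open scoped Matrix.Norms.L2Operator

/-- The rank-one matrix `x yᵀ` built from two vectors of `ℝ^d`. -/
noncomputable def outer {d : ℕ} (x y : EuclideanSpace ℝ (Fin d)) : Matrix (Fin d) (Fin d) ℝ :=
  Matrix.vecMulVec (EuclideanSpace.equiv (Fin d) ℝ x) (EuclideanSpace.equiv (Fin d) ℝ y)

variable {d : ℕ}

lemma outer_apply (x y : EuclideanSpace ℝ (Fin d)) (i j : Fin d) : outer x y i j = x i * y j := rfl

lemma outer_add_left (x x' y : EuclideanSpace ℝ (Fin d)) :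
    outer (x + x') y = outer x y + outer x' y := by
  ext i j; simp [outer_apply]; ring

lemma outer_smul_left (c : ℝ) (x y : EuclideanSpace ℝ (Fin d)) :
    outer (c • x) y = c • outer x y := by
  ext i j; simp [outer_apply]; ring

lemma outer_add_right (x y y' : EuclideanSpace ℝ (Fin d)) :
    outer x (y + y') = outer x y + outer x y' := by
  ext i j; simp [outer_apply]; ring

lemma outer_smul_right (c : ℝ) (x y : EuclideanSpace ℝ (Fin d)) :
    outer x (c • y) = c • outer x y := by
  ext i j; simp [outer_apply]; ring

lemma outer_transpose (x y : EuclideanSpace ℝ (Fin d)) : (outer x y)ᵀ = outer y x := by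
  ext i j; simp [outer_apply, mul_comm]

lemma norm_outer_le (x y : EuclideanSpace ℝ (Fin d)) : ‖outer x y‖ ≤ ‖x‖ * ‖y‖ := by
  rw [Matrix.l2_opNorm_def]
  apply ContinuousLinearMap.opNorm_le_bound _ (by positivity)
  intro z
  have h1 : (Matrix.toEuclideanLin.trans LinearMap.toContinuousLinearMap (outer x y)) z
      = (EuclideanSpace.equiv (Fin d) ℝ).symm ((outer x y) *ᵥ (EuclideanSpace.equiv (Fin d) ℝ z)) := rfl
  rw [h1]
  have h2 : (outer x y) *ᵥ (EuclideanSpace.equiv (Fin d) ℝ z)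
      = ((EuclideanSpace.equiv (Fin d) ℝ y) ⬝ᵥ (EuclideanSpace.equiv (Fin d) ℝ z)) • (EuclideanSpace.equiv (Fin d) ℝ x) := by
    ext i
    simp [Matrix.mulVec, dotProduct, outer_apply, Finset.mul_sum, mul_assoc]
    rw [Finset.sum_mul]
    exact Finset.sum_congr rfl fun k _ => by ring
  rw [h2]
  have h3 : ‖(EuclideanSpace.equiv (Fin d) ℝ).symm
      (((EuclideanSpace.equiv (Fin d) ℝ y) ⬝ᵥ (EuclideanSpace.equiv (Fin d) ℝ z)) • (EuclideanSpace.equiv (Fin d) ℝ x))‖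
      = ‖((EuclideanSpace.equiv (Fin d) ℝ y) ⬝ᵥ (EuclideanSpace.equiv (Fin d) ℝ z))‖ * ‖x‖ := by
    rw [(EuclideanSpace.equiv (Fin d) ℝ).symm.map_smul]
    simp [norm_smul]
  rw [h3]
  have h4 : (EuclideanSpace.equiv (Fin d) ℝ y) ⬝ᵥ (EuclideanSpace.equiv (Fin d) ℝ z) = inner ℝ y z := by
    simp [dotProduct, PiLp.inner_apply, RCLike.inner_apply, mul_comm]
  rw [h4]
  have h5 := abs_real_inner_le_norm y z
  calc ‖(inner ℝ y z : ℝ)‖ * ‖x‖ ≤ (‖y‖ * ‖z‖) * ‖x‖ := by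
        apply mul_le_mul_of_nonneg_right _ (norm_nonneg x)
        simpa [Real.norm_eq_abs] using h5
    _ = ‖x‖ * ‖y‖ * ‖z‖ := by ring

noncomputable def outerCLM (d : ℕ) : EuclideanSpace ℝ (Fin d) →L[ℝ]
    EuclideanSpace ℝ (Fin d) →L[ℝ] Matrix (Fin d) (Fin d) ℝ :=
  LinearMap.mkContinuous₂
    (LinearMap.mk₂ ℝ outer outer_add_left outer_smul_left outer_add_right outer_smul_right)
    1 (fun x y => by simpa using norm_outer_le x y)

@[simp] lemma outerCLM_apply (x y : EuclideanSpace ℝ (Fin d)) : outerCLM d x y = outer x y := rfl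

lemma outer_eq_sum (x y : EuclideanSpace ℝ (Fin d)) :
    outer x y = ∑ i : Fin d, ∑ j : Fin d, (x i * y j) • Matrix.single i j 1 := by
  ext a b
  rw [outer_apply]
  simp only [Matrix.sum_apply, Matrix.smul_apply, Matrix.single, Matrix.of_apply,
    smul_eq_mul, mul_ite, mul_one, mul_zero]
  rw [Finset.sum_comm]
  rw [Finset.sum_eq_single b, Finset.sum_eq_single a] <;> simp +contextual [eq_comm]

lemma stronglyMeasurable_outer {α : Type*} [MeasurableSpace α]
    {f g : α → EuclideanSpace ℝ (Fin d)} (hf : Measurable f) (hg : Measurable g) :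
    StronglyMeasurable (fun a => outer (f a) (g a)) := by
  have : (fun a => outer (f a) (g a))
      = fun a => ∑ i : Fin d, ∑ j : Fin d, (f a i * g a j) • Matrix.single i j 1 := by
    funext a; exact outer_eq_sum _ _
  rw [this]
  apply Finset.stronglyMeasurable_fun_sum
  intro i _
  apply Finset.stronglyMeasurable_fun_sum
  intro j _
  exact (((EuclideanSpace.proj (𝕜 := ℝ) i).continuous.measurable.comp hf).mul ((EuclideanSpace.proj (𝕜 := ℝ) j).continuous.measurable.comp hg)).stronglyMeasurable.smul_const _

noncomputable def entryCLM (d : ℕ) (i j : Fin d) : Matrix (Fin d) (Fin d) ℝ →L[ℝ] ℝ :=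
  LinearMap.toContinuousLinearMap (Matrix.entryLinearMap ℝ ℝ i j)

@[simp] lemma entryCLM_apply (i j : Fin d) (A : Matrix (Fin d) (Fin d) ℝ) :
    entryCLM d i j A = A i j := rfl

noncomputable def trCLM (d : ℕ) : Matrix (Fin d) (Fin d) ℝ →L[ℝ] Matrix (Fin d) (Fin d) ℝ :=
  LinearMap.toContinuousLinearMap (Matrix.transposeLinearEquiv (Fin d) (Fin d) ℝ ℝ).toLinearMap

@[simp] lemma trCLM_apply (A : Matrix (Fin d) (Fin d) ℝ) : trCLM d A = Aᵀ := rfl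

lemma l2_opNorm_transpose (A : Matrix (Fin d) (Fin d) ℝ) : ‖Aᵀ‖ = ‖A‖ := by
  have h : Aᵀ = Aᴴ := by
    ext i j; simp [Matrix.conjTranspose_apply]
  rw [h, Matrix.l2_opNorm_conjTranspose]

lemma sq_norm_euclidean (x : EuclideanSpace ℝ (Fin d)) : ‖x‖ ^ 2 = ∑ i, x i * x i := by
  rw [EuclideanSpace.norm_eq, Real.sq_sqrt (by positivity)]
  exact Finset.sum_congr rfl fun i _ => by rw [Real.norm_eq_abs, sq, abs_mul_abs_self]

/-- For a jointly measurable, square-integrable process `U` with wide-sense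
stationary covariance `E[U_v U_sᵀ] = γ(v−s)` and locally integrable `‖γ‖`, the second-moment
matrix `M_T` of the time average `(1/T)∫₀ᵀ U_v dv` satisfies
`‖M_T‖ ≤ (2/T)∫₀ᵀ ‖γ(v)‖ dv`, with `‖·‖` the operator norm induced by the Euclidean norm. -/
theorem stmt_7 {Ω : Type*} [MeasurableSpace Ω] (P : Measure Ω) [IsProbabilityMeasure P]
    (d : ℕ) (U : ℝ → Ω → EuclideanSpace ℝ (Fin d))
    (hUmeas : Measurable (fun p : ℝ × Ω => U p.1 p.2))
    (hUL2 : ∀ v : ℝ, 0 ≤ v → MemLp (U v) 2 P)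
    (hUpaths : ∀ᵐ ω ∂P, ∀ T : ℝ, 0 ≤ T →
      IntegrableOn (fun v => U v ω) (Set.Icc 0 T) volume)
    (γ : ℝ → Matrix (Fin d) (Fin d) ℝ) (hγmeas : StronglyMeasurable γ)
    (hγloc : LocallyIntegrable (fun v => ‖γ v‖) volume)
    (hcov : ∀ v s : ℝ, 0 ≤ v → 0 ≤ s →
      (∫ ω, outer (U v ω) (U s ω) ∂P) = γ (v - s)) :
    ∀ T : ℝ, 0 < T →
      ‖∫ ω, outer ((1 / T) • ∫ v in (0:ℝ)..T, U v ω)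
          ((1 / T) • ∫ v in (0:ℝ)..T, U v ω) ∂P‖
        ≤ (2 / T) * ∫ v in (0:ℝ)..T, ‖γ v‖ := by
  -- measurability of sections
  have hUsec : ∀ v : ℝ, Measurable (U v) := fun v =>
    hUmeas.comp (measurable_const.prodMk measurable_id)
  -- the constant `C = E‖U_v‖²`
  set C : ℝ := ∑ i : Fin d, γ 0 i i with hCdef
  have houter_int : ∀ v : ℝ, 0 ≤ v → Integrable (fun ω => outer (U v ω) (U v ω)) P := by
    intro v hv
    refine Integrable.mono' ((hUL2 v hv).norm.integrable_sq) 
      (stronglyMeasurable_outer (hUsec v) (hUsec v)).aestronglyMeasurable ?_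
    filter_upwards with ω
    calc ‖outer (U v ω) (U v ω)‖ ≤ ‖U v ω‖ * ‖U v ω‖ := norm_outer_le _ _
      _ = ‖U v ω‖ ^ 2 := (sq (‖U v ω‖)).symm
  have hC : ∀ v : ℝ, 0 ≤ v → ∫ ω, ‖U v ω‖ ^ 2 ∂P = C := by
    intro v hv
    have hent : ∀ i j : Fin d, ∫ ω, U v ω i * U v ω j ∂P = γ 0 i j := by
      intro i j
      have h1 := (entryCLM d i j).integral_comp_comm (houter_int v hv)
      simp only [entryCLM_apply, outer_apply] at h1
      rw [h1, hcov v v hv hv, sub_self]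
    have hint : ∀ i j : Fin d, Integrable (fun ω => U v ω i * U v ω j) P := by
      intro i j
      have := (entryCLM d i j).integrable_comp (houter_int v hv)
      simpa only [entryCLM_apply, outer_apply] using this
    calc ∫ ω, ‖U v ω‖ ^ 2 ∂P = ∫ ω, ∑ i : Fin d, U v ω i * U v ω i ∂P := by
          congr 1; funext ω; exact sq_norm_euclidean _
      _ = ∑ i : Fin d, ∫ ω, U v ω i * U v ω i ∂P :=
          integral_finset_sum _ (fun i _ => hint i i)
      _ = C := by rw [hCdef]; exact Finset.sum_congr rfl fun i _ => hent i i
  have hC0 : 0 ≤ C := by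
    rw [← hC 0 le_rfl]; positivity
  -- integrability in ω with uniform bound C
  have hωint : ∀ v s : ℝ, 0 ≤ v → 0 ≤ s →
      Integrable (fun ω => outer (U v ω) (U s ω)) P := by
    intro v s hv hs
    refine Integrable.mono'
      ((((hUL2 v hv).norm.integrable_sq).add ((hUL2 s hs).norm.integrable_sq)).div_const 2)
      (stronglyMeasurable_outer (hUsec v) (hUsec s)).aestronglyMeasurable ?_
    filter_upwards with ω
    calc ‖outer (U v ω) (U s ω)‖ ≤ ‖U v ω‖ * ‖U s ω‖ := norm_outer_le _ _
      _ ≤ (‖U v ω‖ ^ 2 + ‖U s ω‖ ^ 2) / 2 := by nlinarith [sq_nonneg (‖U v ω‖ - ‖U s ω‖)]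
  have hbnd : ∀ v s : ℝ, 0 ≤ v → 0 ≤ s →
      ∫ ω, ‖outer (U v ω) (U s ω)‖ ∂P ≤ C := by
    intro v s hv hs
    have hmaj : Integrable (fun ω => (‖U v ω‖ ^ 2 + ‖U s ω‖ ^ 2) / 2) P :=
      (((hUL2 v hv).norm.integrable_sq).add ((hUL2 s hs).norm.integrable_sq)).div_const 2
    calc ∫ ω, ‖outer (U v ω) (U s ω)‖ ∂P
        ≤ ∫ ω, (‖U v ω‖ ^ 2 + ‖U s ω‖ ^ 2) / 2 ∂P := by
          refine integral_mono (hωint v s hv hs).norm hmaj ?_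
          intro ω
          calc ‖outer (U v ω) (U s ω)‖ ≤ ‖U v ω‖ * ‖U s ω‖ := norm_outer_le _ _
            _ ≤ (‖U v ω‖ ^ 2 + ‖U s ω‖ ^ 2) / 2 := by
                nlinarith [sq_nonneg (‖U v ω‖ - ‖U s ω‖)]
      _ = ((∫ ω, ‖U v ω‖ ^ 2 ∂P) + ∫ ω, ‖U s ω‖ ^ 2 ∂P) / 2 := by
          rw [MeasureTheory.integral_div, integral_add ((hUL2 v hv).norm.integrable_sq)
            ((hUL2 s hs).norm.integrable_sq)]
      _ = C := by rw [hC v hv, hC s hs]; ring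
  -- symmetry of ‖γ‖
  have hsymm : ∀ u : ℝ, ‖γ (-u)‖ = ‖γ u‖ := by
    intro u
    set v : ℝ := max u 0 with hvdef
    set s : ℝ := max (-u) 0 with hsdef
    have hv : 0 ≤ v := le_max_right _ _
    have hs : 0 ≤ s := le_max_right _ _
    have hvs : v - s = u := by
      rcases le_total u 0 with h | h
      · simp [hvdef, hsdef, max_eq_right h, max_eq_left (neg_nonneg.mpr h)]
      · simp [hvdef, hsdef, max_eq_left h, max_eq_right (neg_nonpos.mpr h)]
    have hsv : s - v = -u := by rw [← hvs]; ring
    have h1 : γ (-u) = (γ u)ᵀ := by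
      rw [← hsv, ← hvs, ← hcov v s hv hs, ← hcov s v hs hv]
      have := (trCLM d).integral_comp_comm (hωint v s hv hs)
      simp only [trCLM_apply, outer_transpose] at this
      exact this
    rw [h1, l2_opNorm_transpose]
  -- main argument
  intro T hT
  set μ : Measure ℝ := volume.restrict (Set.Ioc (0:ℝ) T) with hμdef
  have hγInt : ∀ a b : ℝ, IntervalIntegrable (fun u => ‖γ u‖) volume a b := fun a b =>
    (hγloc.integrableOn_isCompact isCompact_uIcc).intervalIntegrable
  have hmemp : ∀ᵐ p ∂(μ.prod μ), p.1 ∈ Set.Ioc (0:ℝ) T ∧ p.2 ∈ Set.Ioc (0:ℝ) T := by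
    rw [hμdef, Measure.prod_restrict]
    filter_upwards [ae_restrict_mem (measurableSet_Ioc.prod measurableSet_Ioc)] with p hp
    exact hp
  have hFm : AEStronglyMeasurable (fun q : (ℝ × ℝ) × Ω => outer (U q.1.1 q.2) (U q.1.2 q.2))
      ((μ.prod μ).prod P) :=
    (stronglyMeasurable_outer
      (hUmeas.comp ((measurable_fst.comp measurable_fst).prodMk measurable_snd))
      (hUmeas.comp ((measurable_snd.comp measurable_fst).prodMk
        measurable_snd))).aestronglyMeasurable
  have hFint : Integrable (fun q : (ℝ × ℝ) × Ω => outer (U q.1.1 q.2) (U q.1.2 q.2))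
      ((μ.prod μ).prod P) := by
    rw [integrable_prod_iff hFm]
    constructor
    · filter_upwards [hmemp] with p hp
      exact hωint p.1 p.2 hp.1.1.le hp.2.1.le
    · refine Integrable.mono' (integrable_const C) hFm.norm.integral_prod_right' ?_
      filter_upwards [hmemp] with p hp
      rw [Real.norm_eq_abs, abs_of_nonneg (integral_nonneg fun ω => norm_nonneg _)]
      exact hbnd p.1 p.2 hp.1.1.le hp.2.1.le
  have hswap : Integrable (fun q : Ω × (ℝ × ℝ) => outer (U q.2.1 q.1) (U q.2.2 q.1))
      (P.prod (μ.prod μ)) := hFint.swap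
  have hsec : ∀ᵐ ω ∂P, Integrable (fun p : ℝ × ℝ => outer (U p.1 ω) (U p.2 ω)) (μ.prod μ) :=
    hswap.prod_right_ae
  have hpath : ∀ᵐ ω ∂P,
      outer ((1 / T) • ∫ v in (0:ℝ)..T, U v ω) ((1 / T) • ∫ v in (0:ℝ)..T, U v ω)
        = ((1 / T) * (1 / T)) • ∫ p, outer (U p.1 ω) (U p.2 ω) ∂(μ.prod μ) := by
    filter_upwards [hUpaths, hsec] with ω hω hsecω
    have hIv : Integrable (fun v => U v ω) μ := (hω T hT.le).mono_set Set.Ioc_subset_Icc_self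
    have hX : (∫ v in (0:ℝ)..T, U v ω) = ∫ v, U v ω ∂μ := intervalIntegral.integral_of_le hT.le
    rw [outer_smul_left, outer_smul_right, smul_smul]
    congr 1
    have h1 : ∀ v : ℝ, outer (U v ω) (∫ v, U v ω ∂μ) = ∫ s, outer (U v ω) (U s ω) ∂μ := by
      intro v
      have h := (outerCLM d (U v ω)).integral_comp_comm hIv
      simp only [outerCLM_apply] at h
      exact h.symm
    have h2 : outer (∫ v, U v ω ∂μ) (∫ v, U v ω ∂μ)
        = ∫ v, outer (U v ω) (∫ v, U v ω ∂μ) ∂μ := by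
      have h := ((outerCLM d).flip (∫ v, U v ω ∂μ)).integral_comp_comm hIv
      simp only [ContinuousLinearMap.flip_apply, outerCLM_apply] at h
      exact h.symm
    rw [hX, h2]
    rw [show (fun v => outer (U v ω) (∫ v, U v ω ∂μ))
        = fun v => ∫ s, outer (U v ω) (U s ω) ∂μ from funext h1]
    exact integral_integral hsecω
  have key : (∫ ω, outer ((1 / T) • ∫ v in (0:ℝ)..T, U v ω)
      ((1 / T) • ∫ v in (0:ℝ)..T, U v ω) ∂P)
      = ((1 / T) * (1 / T)) • ∫ p, γ (p.1 - p.2) ∂(μ.prod μ) := by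
    rw [integral_congr_ae hpath, MeasureTheory.integral_smul]
    congr 1
    calc ∫ ω, ∫ p, outer (U p.1 ω) (U p.2 ω) ∂(μ.prod μ) ∂P
        = ∫ p, ∫ ω, outer (U p.1 ω) (U p.2 ω) ∂P ∂(μ.prod μ) :=
          integral_integral_swap hswap
      _ = ∫ p, γ (p.1 - p.2) ∂(μ.prod μ) := by
          refine integral_congr_ae ?_
          filter_upwards [hmemp] with p hp
          exact hcov p.1 p.2 hp.1.1.le hp.2.1.le
  rw [key]
  set K : ℝ := ∫ u in (-T)..T, ‖γ u‖ with hKdef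
  have hKval : K = 2 * ∫ v in (0:ℝ)..T, ‖γ v‖ := by
    have h2 : ∫ x in (0:ℝ)..T, ‖γ (-x)‖ = ∫ x in (-T)..(-0:ℝ), ‖γ x‖ :=
      intervalIntegral.integral_comp_neg (fun u => ‖γ u‖)
    rw [neg_zero] at h2
    have h1 : ∫ u in (-T)..(0:ℝ), ‖γ u‖ = ∫ u in (0:ℝ)..T, ‖γ u‖ := by
      rw [← h2]
      exact intervalIntegral.integral_congr fun x _ => hsymm x
    have h3 : K = (∫ u in (-T)..(0:ℝ), ‖γ u‖) + ∫ u in (0:ℝ)..T, ‖γ u‖ :=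
      (intervalIntegral.integral_add_adjacent_intervals (hγInt (-T) 0) (hγInt 0 T)).symm
    rw [h3, h1]; ring
  have hg_meas : AEStronglyMeasurable (fun p : ℝ × ℝ => ‖γ (p.1 - p.2)‖) (μ.prod μ) :=
    ((hγmeas.norm).comp_measurable (measurable_fst.sub measurable_snd)).aestronglyMeasurable
  have hinner_int : ∀ v : ℝ, Integrable (fun s => ‖γ (v - s)‖) μ := by
    intro v
    have h4 : IntervalIntegrable (fun s => ‖γ (v - s)‖) volume (v - (v - T)) (v - v) :=
      (hγInt (v - T) v).comp_sub_left v
    have h4' : IntervalIntegrable (fun s => ‖γ (v - s)‖) volume 0 T := by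
      have e1 : v - v = 0 := sub_self v
      have e2 : v - (v - T) = T := by ring
      rw [e1, e2] at h4
      exact h4.symm
    exact h4'.1
  have hinner_bound : ∀ v ∈ Set.Ioc (0:ℝ) T, ∫ s, ‖γ (v - s)‖ ∂μ ≤ K := by
    intro v hv
    have h6 : ∫ s, ‖γ (v - s)‖ ∂μ = ∫ s in (0:ℝ)..T, ‖γ (v - s)‖ :=
      (intervalIntegral.integral_of_le hT.le).symm
    rw [h6, intervalIntegral.integral_comp_sub_left (fun u => ‖γ u‖) v, sub_zero]
    exact intervalIntegral.integral_mono_interval (by linarith [hv.1.le])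
      (by linarith) hv.2 (ae_of_all _ fun x => norm_nonneg _) (hγInt (-T) T)
  have hg_int : Integrable (fun p : ℝ × ℝ => ‖γ (p.1 - p.2)‖) (μ.prod μ) := by
    rw [integrable_prod_iff hg_meas]
    refine ⟨ae_of_all _ fun v => hinner_int v, ?_⟩
    simp only [norm_norm]
    refine Integrable.mono' (integrable_const K) hg_meas.integral_prod_right' ?_
    filter_upwards [ae_restrict_mem measurableSet_Ioc] with v hv
    rw [Real.norm_eq_abs, abs_of_nonneg (integral_nonneg fun s => norm_nonneg _)]
    exact hinner_bound v hv
  have hintint : Integrable (fun v => ∫ s, ‖γ (v - s)‖ ∂μ) μ := by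
    have h := hg_int.integral_norm_prod_left
    simpa only [norm_norm] using h
  have hprod_bound : ∫ p, ‖γ (p.1 - p.2)‖ ∂(μ.prod μ) ≤ T * K := by
    rw [integral_prod _ hg_int]
    have hμT : (μ Set.univ).toReal = T := by
      rw [hμdef]
      simp [Real.volume_Ioc, hT.le]
    calc ∫ v, ∫ s, ‖γ (v - s)‖ ∂μ ∂μ ≤ ∫ _v, K ∂μ := by
          refine integral_mono_ae hintint (integrable_const K) ?_
          filter_upwards [ae_restrict_mem measurableSet_Ioc] with v hv
          exact hinner_bound v hv
      _ = (μ Set.univ).toReal • K := by rw [MeasureTheory.integral_const]; rfl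
      _ = T * K := by rw [hμT, smul_eq_mul]
  calc ‖((1 / T) * (1 / T)) • ∫ p, γ (p.1 - p.2) ∂(μ.prod μ)‖
      = ((1 / T) * (1 / T)) * ‖∫ p, γ (p.1 - p.2) ∂(μ.prod μ)‖ := by
        rw [_root_.norm_smul, Real.norm_eq_abs, abs_of_nonneg (by positivity : (0:ℝ) ≤ (1/T)*(1/T))]
    _ ≤ ((1 / T) * (1 / T)) * (T * K) := by
        refine mul_le_mul_of_nonneg_left ?_ (by positivity)
        exact (MeasureTheory.norm_integral_le_integral_norm _).trans hprod_bound
    _ = (2 / T) * ∫ v in (0:ℝ)..T, ‖γ v‖ := by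
        rw [hKval]
        field_simp
end
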